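/- Let M be a probability measure on a measure space and f a nonnegative integrable function with the same total mass as M (∫f = ∫dM = 1). Then the relative entropy H(f|M) = ∫ f log(f/M) satisfies 0 ≤ H(f|M) ≤ ‖f/M^{1/2}‖_{L²} · ‖f/M^{1/2} − M^{1/2}‖_{L²}, provided f/M^{1/2} ∈ L². -/

import Mathlib

open MeasureTheory

/-- Bounds on the relative entropy: `0 ≤ H(f|M) ≤ ‖f/M^{1/2}‖ ‖f/M^{1/2} − M^{1/2}‖`. -/
theorem stmt15 {Ω : Type*} [MeasurableSpace Ω] (μ : Measure Ω) (M f : Ω → ℝ)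
    (hMmeas : Measurable M) (hfmeas : Measurable f)
    (hMpos : ∀ᵐ ω ∂μ, 0 < M ω) (hM1 : ∫ ω, M ω ∂μ = 1)
    (hf0 : ∀ᵐ ω ∂μ, 0 ≤ f ω) (hf1 : ∫ ω, f ω ∂μ = 1)
    (hfint : Integrable f μ) (hMint : Integrable M μ)
    (hL2 : Integrable (fun ω => (f ω) ^ 2 / M ω) μ)
    (hent : Integrable (fun ω => f ω * Real.log (f ω / M ω)) μ) :
    0 ≤ ∫ ω, f ω * Real.log (f ω / M ω) ∂μ ∧
    ∫ ω, f ω * Real.log (f ω / M ω) ∂μ ≤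
      Real.sqrt (∫ ω, (f ω / Real.sqrt (M ω)) ^ 2 ∂μ) *
      Real.sqrt (∫ ω, (f ω / Real.sqrt (M ω) - Real.sqrt (M ω)) ^ 2 ∂μ) := by
  set A : ℝ := ∫ ω, (f ω) ^ 2 / M ω ∂μ with hA
  -- Pointwise lower bound: f - M ≤ f log(f/M)
  have hlow : ∀ᵐ ω ∂μ, f ω - M ω ≤ f ω * Real.log (f ω / M ω) := by
    filter_upwards [hMpos, hf0] with ω hM hf
    rcases eq_or_lt_of_le hf with h0 | h0
    · simp [← h0]; linarith
    · have hx : (0:ℝ) < M ω / f ω := div_pos hM h0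
      have := Real.log_le_sub_one_of_pos hx
      rw [Real.log_div hM.ne' h0.ne'] at this
      rw [Real.log_div h0.ne' hM.ne']
      have hfne : f ω ≠ 0 := h0.ne'
      have : f ω * (Real.log (M ω) - Real.log (f ω)) ≤ f ω * (M ω / f ω - 1) :=
        mul_le_mul_of_nonneg_left this h0.le
      have h3 : f ω * (M ω / f ω - 1) = M ω - f ω := by field_simp
      rw [mul_sub]
      rw [mul_sub, h3] at this
      linarith
  -- Pointwise upper bound: f log(f/M) ≤ f²/M − f
  have hupp : ∀ᵐ ω ∂μ, f ω * Real.log (f ω / M ω) ≤ (f ω) ^ 2 / M ω - f ω := by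
    filter_upwards [hMpos, hf0] with ω hM hf
    rcases eq_or_lt_of_le hf with h0 | h0
    · simp [← h0]
    · have hx : (0:ℝ) < f ω / M ω := div_pos h0 hM
      have := Real.log_le_sub_one_of_pos hx
      have h2 : f ω * Real.log (f ω / M ω) ≤ f ω * (f ω / M ω - 1) :=
        mul_le_mul_of_nonneg_left this h0.le
      have : f ω * (f ω / M ω) = (f ω) ^ 2 / M ω := by
        field_simp
      nlinarith
  -- Lower bound on the entropy
  have hge : 0 ≤ ∫ ω, f ω * Real.log (f ω / M ω) ∂μ := by
    have hint0 : Integrable (fun ω => f ω - M ω) μ := hfint.sub hMint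
    have := integral_mono_ae hint0 hent hlow
    rw [integral_sub hfint hMint, hf1, hM1] at this
    linarith
  refine ⟨hge, ?_⟩
  -- Identify the first L² integral with A
  have hI1 : ∫ ω, (f ω / Real.sqrt (M ω)) ^ 2 ∂μ = A := by
    apply integral_congr_ae
    filter_upwards [hMpos] with ω hM
    rw [div_pow, Real.sq_sqrt hM.le]
  -- Identify the second L² integral with A - 1
  have heq2 : ∀ᵐ ω ∂μ, (f ω / Real.sqrt (M ω) - Real.sqrt (M ω)) ^ 2
      = (f ω) ^ 2 / M ω - 2 * f ω + M ω := by
    filter_upwards [hMpos] with ω hM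
    have hs : Real.sqrt (M ω) ≠ 0 := (Real.sqrt_pos.mpr hM).ne'
    field_simp
    rw [Real.sq_sqrt hM.le]
    ring
  have hI2 : ∫ ω, (f ω / Real.sqrt (M ω) - Real.sqrt (M ω)) ^ 2 ∂μ = A - 1 := by
    rw [integral_congr_ae heq2]
    have hint1 : Integrable (fun ω => f ω ^ 2 / M ω - 2 * f ω) μ :=
      hL2.sub (hfint.const_mul 2)
    rw [integral_add hint1 hMint,
      integral_sub hL2 (hfint.const_mul 2), MeasureTheory.integral_const_mul, hf1, hM1]
    ring
  -- A - 1 ≥ 0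
  have hA1 : 0 ≤ A - 1 := by
    rw [← hI2]
    apply integral_nonneg_of_ae
    filter_upwards with ω using sq_nonneg _
  -- entropy ≤ A - 1
  have hle : ∫ ω, f ω * Real.log (f ω / M ω) ∂μ ≤ A - 1 := by
    have hint2 : Integrable (fun ω => f ω ^ 2 / M ω - f ω) μ := hL2.sub hfint
    have := integral_mono_ae hent hint2 hupp
    rw [integral_sub hL2 hfint, hf1] at this
    linarith
  rw [hI1, hI2]
  calc ∫ ω, f ω * Real.log (f ω / M ω) ∂μ ≤ A - 1 := hle
    _ = Real.sqrt (A - 1) * Real.sqrt (A - 1) := (Real.mul_self_sqrt hA1).symm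
    _ ≤ Real.sqrt A * Real.sqrt (A - 1) :=
        mul_le_mul_of_nonneg_right (Real.sqrt_le_sqrt (by linarith)) (Real.sqrt_nonneg _)
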